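/- Let α ∈ (0,1], β ≥ 1 − 1/α, and define the polynomial P_n(x) = Γ(αβ+1) Σ_{k=0}^n (−1)^k (n choose k) x^k / Γ(αk + αβ + 1). If L_{α,β} acts on monomials by L_{α,β} x^k = k Φ_{α,β}(k) x^{k−1} − k x^k with Φ_{α,β}(k) = Γ(αk+αβ+1)/Γ(αk+αβ+1−α), then L_{α,β} P_n = −n P_n. -/

import Mathlib

theorem gaussLaguerre_eigenfunction (α β : ℝ) (hα : α ∈ Set.Ioc (0:ℝ) 1)
    (hβ : 1 - 1/α ≤ β) (L : (ℝ → ℝ) →ₗ[ℝ] (ℝ → ℝ))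
    (hL : ∀ k : ℕ, L (fun x => x ^ k) =
      fun x => (k : ℝ) * (Real.Gamma (α*k + α*β + 1) / Real.Gamma (α*k + α*β + 1 - α))
          * x ^ (k - 1) - (k : ℝ) * x ^ k)
    (n : ℕ) :
    L (fun x => Real.Gamma (α*β + 1) * ∑ k ∈ Finset.range (n+1),
        (-1 : ℝ) ^ k * (n.choose k : ℝ) * x ^ k / Real.Gamma (α*k + α*β + 1))
      = fun x => -(n : ℝ) * (Real.Gamma (α*β + 1) * ∑ k ∈ Finset.range (n+1),
        (-1 : ℝ) ^ k * (n.choose k : ℝ) * x ^ k / Real.Gamma (α*k + α*β + 1)) := by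
  have hα0 : (0:ℝ) < α := hα.1
  have hαβ : α - 1 ≤ α * β := by
    have h := mul_le_mul_of_nonneg_left hβ hα0.le
    have : α * (1 - 1/α) = α - 1 := by field_simp
    linarith [this ▸ h]
  have hg : ∀ k : ℕ, 0 < Real.Gamma (α*k + α*β + 1) := by
    intro k
    apply Real.Gamma_pos_of_pos
    have : 0 ≤ α * k := mul_nonneg hα0.le (Nat.cast_nonneg k)
    linarith
  set c : ℕ → ℝ := fun k =>
    Real.Gamma (α*β+1) * ((-1:ℝ)^k * (n.choose k : ℝ) / Real.Gamma (α*k + α*β + 1)) with hc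
  have hfun : (fun x => Real.Gamma (α*β + 1) * ∑ k ∈ Finset.range (n+1),
        (-1 : ℝ) ^ k * (n.choose k : ℝ) * x ^ k / Real.Gamma (α*k + α*β + 1))
      = ∑ k ∈ Finset.range (n+1), c k • (fun x : ℝ => x ^ k) := by
    funext x
    simp only [Finset.sum_apply, Pi.smul_apply, smul_eq_mul, Finset.mul_sum, hc]
    exact Finset.sum_congr rfl fun k _ => by ring
  rw [hfun, map_sum]
  simp only [map_smul, hL]
  funext x
  simp only [Finset.sum_apply, Pi.smul_apply, smul_eq_mul, Finset.mul_sum]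
  have split : ∀ k ∈ Finset.range (n+1),
      c k * ((k : ℝ) * (Real.Gamma (α*k + α*β + 1) / Real.Gamma (α*k + α*β + 1 - α))
          * x ^ (k - 1) - (k : ℝ) * x ^ k)
      = c k * ((k : ℝ) * (Real.Gamma (α*k + α*β + 1) / Real.Gamma (α*k + α*β + 1 - α))
          * x ^ (k - 1)) - c k * ((k : ℝ) * x ^ k) := fun k _ => by ring
  rw [Finset.sum_congr rfl split, Finset.sum_sub_distrib]
  have key : ∑ k ∈ Finset.range (n+1),
      c k * ((k : ℝ) * (Real.Gamma (α*k + α*β + 1) / Real.Gamma (α*k + α*β + 1 - α))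
          * x ^ (k - 1))
      = ∑ j ∈ Finset.range (n+1), ((j : ℝ) - n) * c j * x ^ j := by
    rw [Finset.sum_range_succ' _ n]
    rw [Finset.sum_range_succ ((fun j => ((j:ℝ) - n) * c j * x ^ j)) n]
    simp only [Nat.cast_zero, zero_mul, mul_zero, add_zero, sub_self, zero_mul]
    apply Finset.sum_congr rfl
    intro j hj
    have hjn : j < n := Finset.mem_range.mp hj
    have hG1 : α * ((j:ℕ)+1:ℕ) + α*β + 1 - α = α * j + α*β + 1 := by push_cast; ring
    have hG2 : (Real.Gamma (α * ((j:ℕ)+1:ℕ) + α*β + 1)) ≠ 0 := (hg (j+1)).ne'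
    have hG3 : (Real.Gamma (α * (j:ℕ) + α*β + 1)) ≠ 0 := (hg j).ne'
    have hcomb : ((j:ℝ) + 1) * (n.choose (j+1) : ℝ) = ((n:ℝ) - j) * (n.choose j : ℝ) := by
      have h := Nat.choose_succ_right_eq n j
      have h2 := congrArg (Nat.cast (R := ℝ)) h
      push_cast [Nat.cast_sub hjn.le] at h2
      linarith
    have hG2' : Real.Gamma (1 + α + α*β + α*(j:ℝ)) ≠ 0 := by
      have e : (1:ℝ) + α + α*β + α*j = α * ((j:ℕ)+1:ℕ) + α*β + 1 := by push_cast; ring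
      rw [e]; exact hG2
    have hG3' : Real.Gamma (1 + α*β + α*(j:ℝ)) ≠ 0 := by
      have e : (1:ℝ) + α*β + α*j = α*(j:ℝ) + α*β + 1 := by ring
      rw [e]; exact hG3
    simp only [hc, hG1, Nat.add_sub_cancel]
    push_cast
    ring_nf
    field_simp [hG2', hG3']
    ring_nf
    have hcomb' : ((j:ℝ) + 1) * (n.choose (1+j) : ℝ) = ((n:ℝ) - j) * (n.choose j : ℝ) := by
      rw [add_comm 1 j]; exact hcomb
    linear_combination (-(Real.Gamma (1+α*β) * x^j)) * hcomb'
  rw [key, ← Finset.sum_sub_distrib]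
  have comb2 : ∀ k ∈ Finset.range (n+1),
      ((k:ℝ) - n) * c k * x ^ k - c k * ((k:ℝ) * x ^ k) = -(n:ℝ) * (c k * x ^ k) :=
    fun k _ => by ring
  rw [Finset.sum_congr rfl comb2, ← Finset.mul_sum]
  rw [Finset.mul_sum]
  exact Finset.sum_congr rfl fun k _ => by simp only [hc]; ring
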